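/- arXiv:2509.20928 — 2 statements merged into one kernel-verified Lean document; each statement's English description precedes it below -/
import Mathlib

section
/- Let d be a positive integer, let μ, μ̂ ∈ ℝ^d, and let Σ, Σ̂ be d×d real symmetric positive-definite matrices. Let λ̂_min denote the smallest eigenvalue of Σ̂. If (1/λ̂_min)·(‖μ − μ̂‖₂² + ‖Σ − Σ̂‖_N) + √d·‖Σ − Σ̂‖_F ≤ ‖μ‖₂², then log det Σ̂ + tr(Σ̂⁻¹ Σ) + (μ − μ̂)ᵀ Σ̂⁻¹ (μ − μ̂) ≤ tr Σ + ‖μ‖₂². -/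
open Matrix Real


variable {n : Type*} [Fintype n] [DecidableEq n]

lemma psd_dot {M : Matrix n n ℝ} (hM : M.PosSemidef) (x : n → ℝ) :
    0 ≤ x ⬝ᵥ (M *ᵥ x) := by
  simpa using hM.dotProduct_mulVec_nonneg x

lemma spectral_real {A : Matrix n n ℝ} (hA : A.IsHermitian) :
    A = (hA.eigenvectorUnitary : Matrix n n ℝ) * diagonal hA.eigenvalues *
      star (hA.eigenvectorUnitary : Matrix n n ℝ) := by
  have := hA.spectral_theorem
  simpa using this

lemma trace_eq_sum_eigs {A : Matrix n n ℝ} (hA : A.IsHermitian) :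
    A.trace = ∑ i, hA.eigenvalues i := by
  conv_lhs => rw [spectral_real hA]
  rw [Matrix.trace_mul_comm, ← Matrix.mul_assoc]
  have h1 : star (hA.eigenvectorUnitary : Matrix n n ℝ) *
      (hA.eigenvectorUnitary : Matrix n n ℝ) = 1 := by
    exact Matrix.mem_unitaryGroup_iff'.mp hA.eigenvectorUnitary.2
  rw [h1, Matrix.one_mul, Matrix.trace_diagonal]

lemma inv_spectral {S : Matrix n n ℝ} (hS : S.PosDef) :
    S⁻¹ = (hS.1.eigenvectorUnitary : Matrix n n ℝ) * diagonal (fun i => (hS.1.eigenvalues i)⁻¹) *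
      star (hS.1.eigenvectorUnitary : Matrix n n ℝ) := by
  set V := (hS.1.eigenvectorUnitary : Matrix n n ℝ)
  have hV : V * star V = 1 := Matrix.mem_unitaryGroup_iff.mp hS.1.eigenvectorUnitary.2
  have hV' : star V * V = 1 := Matrix.mem_unitaryGroup_iff'.mp hS.1.eigenvectorUnitary.2
  apply Matrix.inv_eq_right_inv
  have hstep : S * (V * diagonal (fun i => (hS.1.eigenvalues i)⁻¹) * star V) =
      V * diagonal hS.1.eigenvalues * star V *
        (V * diagonal (fun i => (hS.1.eigenvalues i)⁻¹) * star V) :=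
    congrArg (· * _) (spectral_real hS.1)
  rw [hstep]
  calc V * diagonal hS.1.eigenvalues * star V *
        (V * diagonal (fun i => (hS.1.eigenvalues i)⁻¹) * star V)
      = V * diagonal hS.1.eigenvalues * (star V * V) *
        diagonal (fun i => (hS.1.eigenvalues i)⁻¹) * star V := by
        simp only [Matrix.mul_assoc]
    _ = V * (diagonal hS.1.eigenvalues * diagonal (fun i => (hS.1.eigenvalues i)⁻¹)) * star V := by
        rw [hV']; simp only [Matrix.mul_one, Matrix.mul_assoc]
    _ = 1 := by
        rw [Matrix.diagonal_mul_diagonal]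
        have : (fun i => hS.1.eigenvalues i * (hS.1.eigenvalues i)⁻¹) = fun _ => (1:ℝ) := by
          funext i; exact mul_inv_cancel₀ (hS.eigenvalues_pos i).ne'
        rw [this, Matrix.diagonal_one, Matrix.mul_one, hV]

lemma shift_psd {S : Matrix n n ℝ} (hS : S.PosDef) {c : ℝ}
    (hc : ∀ i, (hS.1.eigenvalues i)⁻¹ ≤ c) :
    ((c • (1 : Matrix n n ℝ)) - S⁻¹).PosSemidef := by
  set V := (hS.1.eigenvectorUnitary : Matrix n n ℝ)
  have hV : V * star V = 1 := Matrix.mem_unitaryGroup_iff.mp hS.1.eigenvectorUnitary.2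
  have key : (c • (1 : Matrix n n ℝ)) - S⁻¹ =
      V * diagonal (fun i => c - (hS.1.eigenvalues i)⁻¹) * star V := by
    have : diagonal (fun i => c - (hS.1.eigenvalues i)⁻¹) =
        (c • (1 : Matrix n n ℝ)) - diagonal (fun i => (hS.1.eigenvalues i)⁻¹) := by
      rw [Matrix.smul_one_eq_diagonal, ← Matrix.diagonal_sub]
    rw [this, Matrix.mul_sub, Matrix.sub_mul, ← inv_spectral hS]
    congr 1
    rw [Matrix.mul_smul, Matrix.mul_one, Matrix.smul_mul, hV]
  rw [key]
  have hdiag : (diagonal (fun i => c - (hS.1.eigenvalues i)⁻¹)).PosSemidef :=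
    Matrix.posSemidef_diagonal_iff.mpr fun i => sub_nonneg.mpr (hc i)
  simpa [Matrix.star_eq_conjTranspose] using hdiag.mul_mul_conjTranspose_same V

lemma quad_le {M : Matrix n n ℝ} {c : ℝ} (hc : ((c • (1 : Matrix n n ℝ)) - M).PosSemidef)
    (x : n → ℝ) : x ⬝ᵥ (M *ᵥ x) ≤ c * ∑ i, x i ^ 2 := by
  have h := psd_dot hc x
  have hexp : x ⬝ᵥ (((c • (1 : Matrix n n ℝ)) - M) *ᵥ x) =
      c * (∑ i, x i ^ 2) - x ⬝ᵥ (M *ᵥ x) := by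
    rw [Matrix.sub_mulVec, dotProduct_sub]
    congr 1
    rw [Matrix.smul_mulVec, Matrix.one_mulVec, dotProduct_smul]
    simp [dotProduct, sq, Finset.mul_sum]
  linarith [hexp ▸ h]

lemma diag_conj_eq {B : Matrix n n ℝ} (V : Matrix n n ℝ) (i : n) :
    (star V * B * V) i i = (fun j => V j i) ⬝ᵥ (B *ᵥ fun j => V j i) := by
  simp only [Matrix.mul_apply, Matrix.star_apply, star_trivial, Matrix.mulVec,
    dotProduct, Finset.sum_mul, Finset.mul_sum]
  rw [Finset.sum_comm]
  apply Finset.sum_congr rfl; intro k _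
  apply Finset.sum_congr rfl; intro j _
  ring

lemma trace_mul_le {M A : Matrix n n ℝ} (hM : M.PosSemidef) {c : ℝ}
    (hc : ((c • (1 : Matrix n n ℝ)) - M).PosSemidef) (hA : A.IsHermitian) :
    (M * A).trace ≤ c * ∑ i, |hA.eigenvalues i| := by
  set V := (hA.eigenvectorUnitary : Matrix n n ℝ) with hVdef
  have hV' : star V * V = 1 := Matrix.mem_unitaryGroup_iff'.mp hA.eigenvectorUnitary.2
  set N := star V * M * V with hN
  -- diagonal entries of N are in [0, c]
  have hN0 : ∀ i, 0 ≤ N i i := fun i => by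
    rw [hN, diag_conj_eq]; exact psd_dot hM _
  have hNc : ∀ i, N i i ≤ c := by
    intro i
    have h1 : (star V * ((c • (1 : Matrix n n ℝ)) - M) * V) i i =
        c - N i i := by
      rw [Matrix.mul_sub, Matrix.sub_mul, hN]
      have : star V * (c • (1 : Matrix n n ℝ)) * V = c • (1 : Matrix n n ℝ) := by
        rw [Matrix.mul_smul, Matrix.mul_one, Matrix.smul_mul, hV']
      rw [Matrix.sub_apply, this, Matrix.smul_apply, Matrix.one_apply_eq, smul_eq_mul, mul_one]
    have h2 : 0 ≤ (star V * ((c • (1 : Matrix n n ℝ)) - M) * V) i i := by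
      rw [diag_conj_eq]; exact psd_dot hc _
    linarith [h1 ▸ h2]
  -- trace formula
  have htr : (M * A).trace = ∑ i, hA.eigenvalues i * N i i := by
    have hstep : M * A = M * (V * diagonal hA.eigenvalues * star V) :=
      congrArg (M * ·) (spectral_real hA)
    rw [hstep]
    have : M * (V * diagonal hA.eigenvalues * star V) =
        (M * V * diagonal hA.eigenvalues) * star V := by
      simp only [Matrix.mul_assoc]
    rw [this, Matrix.trace_mul_comm, ← Matrix.mul_assoc, ← Matrix.mul_assoc, ← hN]
    rw [Matrix.trace]
    apply Finset.sum_congr rfl; intro i _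
    rw [Matrix.diag_apply, Matrix.mul_diagonal]
    ring
  rw [htr, Finset.mul_sum]
  apply Finset.sum_le_sum
  intro i _
  calc hA.eigenvalues i * N i i ≤ |hA.eigenvalues i| * N i i :=
        mul_le_mul_of_nonneg_right (le_abs_self _) (hN0 i)
    _ ≤ |hA.eigenvalues i| * c := mul_le_mul_of_nonneg_left (hNc i) (abs_nonneg _)
    _ = c * |hA.eigenvalues i| := mul_comm _ _

lemma log_det_le {S : Matrix n n ℝ} (hS : S.PosDef) :
    Real.log S.det ≤ S.trace - Fintype.card n := by
  have hdet : S.det = ∏ i, hS.1.eigenvalues i := by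
    simpa using hS.1.det_eq_prod_eigenvalues
  rw [hdet, Real.log_prod (fun i _ => (hS.eigenvalues_pos i).ne'),
    trace_eq_sum_eigs hS.1]
  have : ∀ i ∈ Finset.univ, Real.log (hS.1.eigenvalues i) ≤ hS.1.eigenvalues i - 1 :=
    fun i _ => Real.log_le_sub_one_of_pos (hS.eigenvalues_pos i)
  calc ∑ i, Real.log (hS.1.eigenvalues i) ≤ ∑ i, (hS.1.eigenvalues i - 1) :=
        Finset.sum_le_sum this
    _ = (∑ i, hS.1.eigenvalues i) - Fintype.card n := by
        rw [Finset.sum_sub_distrib]; simp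

/-- moment-form core of Theorem 1 of the paper.
If `(1/λ̂_min)·(‖μ − μ̂‖₂² + ‖Σ − Σ̂‖_N) + √d·‖Σ − Σ̂‖_F ≤ ‖μ‖₂²`, then
`log det Σ̂ + tr(Σ̂⁻¹ Σ) + (μ − μ̂)ᵀ Σ̂⁻¹ (μ − μ̂) ≤ tr Σ + ‖μ‖₂²`. -/
theorem stmt_0 (d : ℕ) (hd : 0 < d) (mu muHat : Fin d → ℝ)
    (Sig SigHat : Matrix (Fin d) (Fin d) ℝ)
    (hSig : Sig.PosDef) (hSigHat : SigHat.PosDef)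
    (hcond :
      (⨅ i, hSigHat.1.eigenvalues i)⁻¹ *
          ((∑ i, (mu i - muHat i) ^ 2) +
            ∑ i, |(hSig.1.sub hSigHat.1).eigenvalues i|) +
        Real.sqrt d * Real.sqrt (∑ i, ∑ j, (Sig i j - SigHat i j) ^ 2) ≤
      ∑ i, mu i ^ 2) :
    Real.log SigHat.det + (SigHat⁻¹ * Sig).trace +
        (mu - muHat) ⬝ᵥ (SigHat⁻¹ *ᵥ (mu - muHat)) ≤
      Sig.trace + ∑ i, mu i ^ 2 := by
  haveI : Nonempty (Fin d) := ⟨⟨0, hd⟩⟩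
  set lam := hSigHat.1.eigenvalues with hlam
  set c := (⨅ i, lam i)⁻¹ with hcdef
  obtain ⟨i0, -, hi0⟩ := Finset.exists_min_image Finset.univ lam ⟨⟨0, hd⟩, Finset.mem_univ _⟩
  have hinf : (⨅ i, lam i) = lam i0 :=
    le_antisymm (ciInf_le (Set.finite_range lam).bddBelow i0)
      (le_ciInf fun i => hi0 i (Finset.mem_univ i))
  have hc : ∀ i, (lam i)⁻¹ ≤ c := by
    intro i
    rw [hcdef, hinf]
    exact inv_anti₀ (hSigHat.eigenvalues_pos i0) (hi0 i (Finset.mem_univ i))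
  have hPSD : ((c • (1 : Matrix (Fin d) (Fin d) ℝ)) - SigHat⁻¹).PosSemidef :=
    shift_psd hSigHat hc
  -- log det bound
  have h1 : Real.log SigHat.det ≤ SigHat.trace - d := by
    simpa using log_det_le hSigHat
  -- trace split
  have h2 : (SigHat⁻¹ * Sig).trace = (SigHat⁻¹ * (Sig - SigHat)).trace + d := by
    have hinv : SigHat⁻¹ * SigHat = 1 :=
      Matrix.nonsing_inv_mul _ (isUnit_iff_ne_zero.mpr hSigHat.det_pos.ne')
    have : SigHat⁻¹ * Sig = SigHat⁻¹ * (Sig - SigHat) + 1 := by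
      rw [Matrix.mul_sub, hinv]; abel
    rw [this, Matrix.trace_add, Matrix.trace_one]
    simp
  -- trace bound
  have h3 : (SigHat⁻¹ * (Sig - SigHat)).trace ≤
      c * ∑ i, |(hSig.1.sub hSigHat.1).eigenvalues i| :=
    trace_mul_le hSigHat.inv.posSemidef hPSD (hSig.1.sub hSigHat.1)
  -- quadratic bound
  have h4 : (mu - muHat) ⬝ᵥ (SigHat⁻¹ *ᵥ (mu - muHat)) ≤
      c * ∑ i, (mu i - muHat i) ^ 2 := by
    have := quad_le hPSD (mu - muHat)
    simpa using this
  -- Frobenius bound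
  have h5 : SigHat.trace - Sig.trace ≤
      Real.sqrt d * Real.sqrt (∑ i, ∑ j, (Sig i j - SigHat i j) ^ 2) := by
    have e1 : SigHat.trace - Sig.trace = ∑ i, (SigHat i i - Sig i i) := by
      simp [Matrix.trace, Matrix.diag, Finset.sum_sub_distrib]
    have key : (∑ i, (SigHat i i - Sig i i)) ^ 2 ≤
        d * ∑ i, ∑ j, (Sig i j - SigHat i j) ^ 2 := by
      calc (∑ i, (SigHat i i - Sig i i)) ^ 2
          ≤ (Finset.univ.card : ℝ) * ∑ i, (SigHat i i - Sig i i) ^ 2 := by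
            exact sq_sum_le_card_mul_sum_sq
        _ ≤ d * ∑ i, ∑ j, (Sig i j - SigHat i j) ^ 2 := by
            rw [Finset.card_univ, Fintype.card_fin]
            apply mul_le_mul_of_nonneg_left _ (Nat.cast_nonneg d)
            apply Finset.sum_le_sum
            intro i _
            have : (SigHat i i - Sig i i) ^ 2 = (Sig i i - SigHat i i) ^ 2 := by ring
            rw [this]
            exact Finset.single_le_sum (f := fun j => (Sig i j - SigHat i j) ^ 2)
              (fun j _ => sq_nonneg _) (Finset.mem_univ i)
    calc SigHat.trace - Sig.trace ≤ |∑ i, (SigHat i i - Sig i i)| := e1 ▸ le_abs_self _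
      _ = Real.sqrt ((∑ i, (SigHat i i - Sig i i)) ^ 2) := (Real.sqrt_sq_eq_abs _).symm
      _ ≤ Real.sqrt (d * ∑ i, ∑ j, (Sig i j - SigHat i j) ^ 2) := Real.sqrt_le_sqrt key
      _ = Real.sqrt d * Real.sqrt (∑ i, ∑ j, (Sig i j - SigHat i j) ^ 2) :=
          Real.sqrt_mul (Nat.cast_nonneg d) _
  have hexpand : c * ((∑ i, (mu i - muHat i) ^ 2) +
      ∑ i, |(hSig.1.sub hSigHat.1).eigenvalues i|) =
      c * (∑ i, (mu i - muHat i) ^ 2) +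
      c * ∑ i, |(hSig.1.sub hSigHat.1).eigenvalues i| := mul_add _ _ _
  linarith
end

section
/- Let d be a positive integer and let P be a probability measure on ℝ^d that is absolutely continuous with respect to Lebesgue measure with density p, has finite second moment ∫‖x‖² dP(x) < ∞, finite differential-entropy integral ∫ p(x)|log p(x)| dx < ∞, mean μ = ∫ x dP(x), and symmetric positive-definite covariance matrix Σ = ∫ (x − μ)(x − μ)ᵀ dP(x). Let μ̂ ∈ ℝ^d and let Σ̂ be a d×d symmetric positive-definite matrix with smallest eigenvalue λ̂_min. Let Q₀ = N(0, I_d) and Q̂ = N(μ̂, Σ̂) be the corresponding Gaussian measures on ℝ^d. If (1/λ̂_min)·(‖μ − μ̂‖₂² + ‖Σ − Σ̂‖_N) + √d·‖Σ − Σ̂‖_F ≤ ‖μ‖₂², then D_KL(P ‖ Q̂) ≤ D_KL(P ‖ Q₀). -/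
open MeasureTheory Matrix Real

/-- The density of the Gaussian measure `N(m, S)` on `ℝ^d` (w.r.t. Lebesgue
measure), for a symmetric positive-definite `S`:
`q_{m,S}(x) = (2π)^{−d/2} (det S)^{−1/2} exp(−(x − m)ᵀ S⁻¹ (x − m)/2)`. -/
noncomputable def gaussDensity {d : ℕ} (m : Fin d → ℝ)
    (S : Matrix (Fin d) (Fin d) ℝ) (x : Fin d → ℝ) : ℝ :=
  (2 * π) ^ (-(d : ℝ) / 2) * S.det ^ (-(1 : ℝ) / 2) *
    Real.exp (-((x - m) ⬝ᵥ (S⁻¹ *ᵥ (x - m))) / 2)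

/-- The Gaussian measure `N(m, S)` on `ℝ^d`: the measure whose density w.r.t.
Lebesgue measure is `gaussDensity m S`. -/
noncomputable def gaussMeasure {d : ℕ} (m : Fin d → ℝ)
    (S : Matrix (Fin d) (Fin d) ℝ) : Measure (Fin d → ℝ) :=
  volume.withDensity fun x => ENNReal.ofReal (gaussDensity m S x)

/-- The Kullback–Leibler divergence `D_KL(P ‖ Q) = ∫ log(dP/dQ) dP` of a measure
`P` with Lebesgue density `p` against the Gaussian `N(m, S)`, expressed through
the density ratio `dP/dQ = p / q_{m,S}`. -/
noncomputable def klDivGauss {d : ℕ} (P : Measure (Fin d → ℝ))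
    (p : (Fin d → ℝ) → ℝ) (m : Fin d → ℝ) (S : Matrix (Fin d) (Fin d) ℝ) : ℝ :=
  ∫ x, Real.log (p x / gaussDensity m S x) ∂P



section MatrixLemmas
variable {d : ℕ}

lemma quad_repr (A : Matrix (Fin d) (Fin d) ℝ) (hA : A.IsHermitian) (x : Fin d → ℝ) :
    x ⬝ᵥ A *ᵥ x = ∑ i, hA.eigenvalues i *
      ((star (hA.eigenvectorUnitary : Matrix (Fin d) (Fin d) ℝ) *ᵥ x) i)^2 := by
  set U := (hA.eigenvectorUnitary : Matrix (Fin d) (Fin d) ℝ) with hU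
  set y := star U *ᵥ x with hy
  conv_lhs => rw [hA.spectral_theorem, Unitary.conjStarAlgAut_apply]
  rw [← mulVec_mulVec, ← mulVec_mulVec, dotProduct_mulVec]
  have h1 : x ᵥ* U = y := by
    rw [hy, Matrix.star_eq_conjTranspose, Matrix.conjTranspose_eq_transpose_of_trivial,
      mulVec_transpose]
  rw [h1]
  simp [mulVec_diagonal, dotProduct, pow_two, mul_comm, mul_assoc, mul_left_comm]
  rfl

lemma norm_pres (A : Matrix (Fin d) (Fin d) ℝ) (hA : A.IsHermitian) (x : Fin d → ℝ) :
    (star (hA.eigenvectorUnitary : Matrix (Fin d) (Fin d) ℝ) *ᵥ x) ⬝ᵥ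
      (star (hA.eigenvectorUnitary : Matrix (Fin d) (Fin d) ℝ) *ᵥ x) = x ⬝ᵥ x := by
  set U := (hA.eigenvectorUnitary : Matrix (Fin d) (Fin d) ℝ) with hU
  have hUU : U * star U = 1 := (Matrix.mem_unitaryGroup_iff).mp hA.eigenvectorUnitary.2
  calc (star U *ᵥ x) ⬝ᵥ (star U *ᵥ x)
      = x ⬝ᵥ (U *ᵥ (star U *ᵥ x)) := by
        rw [dotProduct_mulVec, Matrix.star_eq_conjTranspose,
          Matrix.conjTranspose_eq_transpose_of_trivial, vecMul_transpose,
          dotProduct_comm]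
    _ = x ⬝ᵥ x := by rw [mulVec_mulVec, hUU, one_mulVec]

-- lower bound for hermitian quadratic form
lemma quad_lower (A : Matrix (Fin d) (Fin d) ℝ) (hA : A.IsHermitian) (hd : 0 < d) (x : Fin d → ℝ) :
    (⨅ i, hA.eigenvalues i) * (x ⬝ᵥ x) ≤ x ⬝ᵥ A *ᵥ x := by
  haveI : Nonempty (Fin d) := Fin.pos_iff_nonempty.mp hd
  rw [quad_repr A hA x, ← norm_pres A hA x]
  set y := star (hA.eigenvectorUnitary : Matrix (Fin d) (Fin d) ℝ) *ᵥ x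
  have : (y ⬝ᵥ y) = ∑ i, (y i)^2 := by simp [dotProduct, pow_two]
  rw [this, Finset.mul_sum]
  refine Finset.sum_le_sum fun i _ => ?_
  exact mul_le_mul_of_nonneg_right (ciInf_le (Finite.bddBelow_range _) i) (sq_nonneg _)

end MatrixLemmas

section More
variable {d : ℕ}

lemma inv_quad_upper (M : Matrix (Fin d) (Fin d) ℝ) (hM : M.PosDef) (hd : 0 < d)
    (x : Fin d → ℝ) :
    x ⬝ᵥ M⁻¹ *ᵥ x ≤ (⨅ i, hM.1.eigenvalues i)⁻¹ * (x ⬝ᵥ x) := by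
  haveI : Nonempty (Fin d) := Fin.pos_iff_nonempty.mp hd
  set c := ⨅ i, hM.1.eigenvalues i with hc
  have hcpos : 0 < c := by
    obtain ⟨i0, _, hi0⟩ := Finset.exists_min_image Finset.univ hM.1.eigenvalues
      ⟨Classical.arbitrary (Fin d), Finset.mem_univ _⟩
    exact lt_of_lt_of_le (hM.eigenvalues_pos i0)
      (le_ciInf fun j => hi0 j (Finset.mem_univ j))
  set y := M⁻¹ *ᵥ x with hy
  have hMy : M *ᵥ y = x := by
    rw [hy, mulVec_mulVec, mul_nonsing_inv M (isUnit_iff_ne_zero.mpr hM.det_pos.ne'),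
      one_mulVec]
  have h1 : c * (y ⬝ᵥ y) ≤ y ⬝ᵥ x := by
    have := quad_lower M hM.1 hd y
    rwa [hMy] at this
  have ht0 : 0 ≤ x ⬝ᵥ y := by
    have := hM.posSemidef.inv.dotProduct_mulVec_nonneg x
    simpa using this
  have hyx : y ⬝ᵥ x = x ⬝ᵥ y := dotProduct_comm y x
  have hCS : (x ⬝ᵥ y)^2 ≤ (y ⬝ᵥ y) * (x ⬝ᵥ x) := by
    have h := Finset.sum_mul_sq_le_sq_mul_sq Finset.univ y x
    simp only [dotProduct, pow_two] at *
    calc (∑ i, x i * y i) * (∑ i, x i * y i)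
        = (∑ i, y i * x i) * (∑ i, y i * x i) := by simp [mul_comm]
      _ ≤ (∑ i, y i * y i) * (∑ i, x i * x i) := h
  have hxx : 0 ≤ x ⬝ᵥ x := by
    simp only [dotProduct]
    exact Finset.sum_nonneg fun i _ => mul_self_nonneg _
  rcases eq_or_lt_of_le ht0 with h0 | hpos
  · rw [← h0]
    positivity
  · rw [hyx] at h1
    rw [inv_mul_eq_div, le_div_iff₀ hcpos]
    nlinarith [mul_le_mul_of_nonneg_right h1 hxx,
      mul_le_mul_of_nonneg_left hCS hcpos.le, hpos]

end More

section Traces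
variable {d : ℕ}

lemma star_mul_self_unitary (A : Matrix (Fin d) (Fin d) ℝ) (hA : A.IsHermitian) :
    star (hA.eigenvectorUnitary : Matrix (Fin d) (Fin d) ℝ) *
      (hA.eigenvectorUnitary : Matrix (Fin d) (Fin d) ℝ) = 1 :=
  (Matrix.mem_unitaryGroup_iff').mp hA.eigenvectorUnitary.2

lemma trace_eq_sum_eig (A : Matrix (Fin d) (Fin d) ℝ) (hA : A.IsHermitian) :
    A.trace = ∑ i, hA.eigenvalues i := by
  conv_lhs => rw [hA.spectral_theorem, Unitary.conjStarAlgAut_apply]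
  rw [trace_mul_cycle, star_mul_self_unitary A hA, one_mul]
  simp [Matrix.trace, Matrix.diag, RCLike.ofReal_real_eq_id]

lemma frobenius_eq_sum_eig_sq (A : Matrix (Fin d) (Fin d) ℝ) (hA : A.IsHermitian) :
    ∑ i, ∑ j, (A i j)^2 = ∑ i, (hA.eigenvalues i)^2 := by
  have h1 : ∑ i, ∑ j, (A i j)^2 = (A * A).trace := by
    simp only [Matrix.trace, Matrix.diag, Matrix.mul_apply, pow_two]
    rw [Finset.sum_comm]
    refine Finset.sum_congr rfl fun i _ => Finset.sum_congr rfl fun j _ => ?_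
    rw [← hA.apply j i]; simp [mul_comm]
  rw [h1]
  conv_lhs => rw [hA.spectral_theorem, Unitary.conjStarAlgAut_apply]
  rw [show ∀ U D V : Matrix (Fin d) (Fin d) ℝ, U * D * V * (U * D * V)
      = U * (D * ((V * U) * (D * V))) by intros; noncomm_ring]
  rw [star_mul_self_unitary A hA, one_mul]
  rw [show ∀ U D V : Matrix (Fin d) (Fin d) ℝ, U * (D * (D * V)) = U * (D * D) * V
      by intros; noncomm_ring]
  rw [trace_mul_cycle, ← mul_assoc, star_mul_self_unitary A hA, one_mul,
    diagonal_mul_diagonal]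
  simp [Matrix.trace, Matrix.diag, RCLike.ofReal_real_eq_id, pow_two]

lemma trace_mul_le_s1 (M : Matrix (Fin d) (Fin d) ℝ) (hM : M.PosDef) (hd : 0 < d)
    (A : Matrix (Fin d) (Fin d) ℝ) (hA : A.IsHermitian) :
    (M⁻¹ * A).trace ≤ (⨅ i, hM.1.eigenvalues i)⁻¹ * ∑ i, |hA.eigenvalues i| := by
  haveI : Nonempty (Fin d) := Fin.pos_iff_nonempty.mp hd
  set c := ⨅ i, hM.1.eigenvalues i with hc
  have hcpos : 0 < c := by
    obtain ⟨i0, _, hi0⟩ := Finset.exists_min_image Finset.univ hM.1.eigenvalues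
      ⟨Classical.arbitrary (Fin d), Finset.mem_univ _⟩
    exact lt_of_lt_of_le (hM.eigenvalues_pos i0)
      (le_ciInf fun j => hi0 j (Finset.mem_univ j))
  set U := (hA.eigenvectorUnitary : Matrix (Fin d) (Fin d) ℝ) with hU
  conv_lhs => rw [hA.spectral_theorem, Unitary.conjStarAlgAut_apply]
  rw [show M⁻¹ * (U * diagonal (RCLike.ofReal ∘ hA.eigenvalues) * star U)
      = (M⁻¹ * (U * diagonal (RCLike.ofReal ∘ hA.eigenvalues))) * star U
      by noncomm_ring]
  rw [trace_mul_comm]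
  rw [show star U * (M⁻¹ * (U * diagonal (RCLike.ofReal ∘ hA.eigenvalues)))
      = (star U * (M⁻¹ * U)) * diagonal (RCLike.ofReal ∘ hA.eigenvalues)
      by noncomm_ring]
  have htr : ((star U * (M⁻¹ * U)) * diagonal (RCLike.ofReal ∘ hA.eigenvalues)).trace
      = ∑ i, (star U * (M⁻¹ * U)) i i * hA.eigenvalues i := by
    simp [Matrix.trace, Matrix.diag, Matrix.mul_diagonal, RCLike.ofReal_real_eq_id]
  rw [htr, Finset.mul_sum]
  refine Finset.sum_le_sum fun i _ => ?_
  set u : Fin d → ℝ := fun j => U j i with hu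
  have hB : (star U * (M⁻¹ * U)) i i = u ⬝ᵥ M⁻¹ *ᵥ u := by
    simp only [Matrix.mul_apply, Matrix.star_apply, star_trivial, dotProduct,
      Matrix.mulVec, hu]
  have huu : u ⬝ᵥ u = 1 := by
    have := congrArg (fun B => B i i) (star_mul_self_unitary A hA)
    simp only [Matrix.mul_apply, Matrix.star_apply, star_trivial, dotProduct, hu,
      Matrix.one_apply_eq] at this ⊢
    exact this
  have hB0 : 0 ≤ (star U * (M⁻¹ * U)) i i := by
    rw [hB]
    have := hM.posSemidef.inv.dotProduct_mulVec_nonneg u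
    simpa using this
  have hBc : (star U * (M⁻¹ * U)) i i ≤ c⁻¹ := by
    rw [hB]
    calc u ⬝ᵥ M⁻¹ *ᵥ u ≤ c⁻¹ * (u ⬝ᵥ u) := inv_quad_upper M hM hd u
      _ = c⁻¹ := by rw [huu, mul_one]
  calc (star U * (M⁻¹ * U)) i i * hA.eigenvalues i
      ≤ (star U * (M⁻¹ * U)) i i * |hA.eigenvalues i| :=
        mul_le_mul_of_nonneg_left (le_abs_self _) hB0
    _ ≤ c⁻¹ * |hA.eigenvalues i| :=
        mul_le_mul_of_nonneg_right hBc (abs_nonneg _)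

end Traces

lemma matrix_side {d : ℕ} (hd : 0 < d) (mu muHat : Fin d → ℝ)
    (Sig : Matrix (Fin d) (Fin d) ℝ) (hSig : Sig.PosDef)
    (SigHat : Matrix (Fin d) (Fin d) ℝ) (hSigHat : SigHat.PosDef)
    (hcond :
      (⨅ i, hSigHat.1.eigenvalues i)⁻¹ *
          ((∑ i, (mu i - muHat i) ^ 2) +
            ∑ i, |(hSig.1.sub hSigHat.1).eigenvalues i|) +
        Real.sqrt d * Real.sqrt (∑ i, ∑ j, (Sig i j - SigHat i j) ^ 2) ≤
      ∑ i, mu i ^ 2) :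
    Real.log SigHat.det + (SigHat⁻¹ * Sig).trace
      + (mu - muHat) ⬝ᵥ (SigHat⁻¹ *ᵥ (mu - muHat)) ≤ Sig.trace + ∑ i, mu i ^ 2 := by
  haveI : Nonempty (Fin d) := Fin.pos_iff_nonempty.mp hd
  set c := ⨅ i, hSigHat.1.eigenvalues i with hc
  set Δ := Sig - SigHat with hΔdef
  have hΔ : Δ.IsHermitian := hSig.1.sub hSigHat.1
  -- 1. log det bound
  have hlogdet : Real.log SigHat.det ≤ SigHat.trace - d := by
    have hdet : SigHat.det = ∏ i, hSigHat.1.eigenvalues i := by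
      have := hSigHat.1.det_eq_prod_eigenvalues
      simpa using this
    rw [hdet, Real.log_prod (fun i _ => (hSigHat.eigenvalues_pos i).ne'),
      trace_eq_sum_eig SigHat hSigHat.1]
    have : ∑ i, Real.log (hSigHat.1.eigenvalues i)
        ≤ ∑ i, (hSigHat.1.eigenvalues i - 1) :=
      Finset.sum_le_sum fun i _ => Real.log_le_sub_one_of_pos (hSigHat.eigenvalues_pos i)
    rw [Finset.sum_sub_distrib] at this
    simpa using this
  -- 2. trace split
  have htr : (SigHat⁻¹ * Sig).trace = d + (SigHat⁻¹ * Δ).trace := by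
    have : Sig = SigHat + Δ := by rw [hΔdef]; abel
    rw [this, mul_add, trace_add,
      nonsing_inv_mul SigHat (isUnit_iff_ne_zero.mpr hSigHat.det_pos.ne'), trace_one]
    simp
  -- 3. trace ineq
  have htrΔ : (SigHat⁻¹ * Δ).trace ≤ c⁻¹ * ∑ i, |hΔ.eigenvalues i| :=
    trace_mul_le_s1 SigHat hSigHat hd Δ hΔ
  -- 4. quadratic form bound
  have hquad : (mu - muHat) ⬝ᵥ (SigHat⁻¹ *ᵥ (mu - muHat)) ≤ c⁻¹ * ∑ i, (mu i - muHat i)^2 := by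
    have h := inv_quad_upper SigHat hSigHat hd (mu - muHat)
    have : (mu - muHat) ⬝ᵥ (mu - muHat) = ∑ i, (mu i - muHat i)^2 := by
      simp [dotProduct, pow_two]
    rwa [this] at h
  -- 5/6. trace of Δ bound
  have htrHat : SigHat.trace = Sig.trace - Δ.trace := by
    rw [hΔdef, trace_sub]; ring
  have habs : -Δ.trace ≤ Real.sqrt d * Real.sqrt (∑ i, ∑ j, (Sig i j - SigHat i j) ^ 2) := by
    have hF : ∑ i, ∑ j, (Sig i j - SigHat i j) ^ 2 = ∑ i, (hΔ.eigenvalues i)^2 := by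
      rw [← frobenius_eq_sum_eig_sq Δ hΔ]
      simp [hΔdef, Matrix.sub_apply]
    have hsq : (Δ.trace)^2 ≤ (d : ℝ) * ∑ i, (hΔ.eigenvalues i)^2 := by
      rw [trace_eq_sum_eig Δ hΔ]
      have := sq_sum_le_card_mul_sum_sq (s := Finset.univ) (f := hΔ.eigenvalues)
      simpa using this
    calc -Δ.trace ≤ |Δ.trace| := neg_le_abs _
      _ = Real.sqrt ((Δ.trace)^2) := (Real.sqrt_sq_eq_abs _).symm
      _ ≤ Real.sqrt ((d : ℝ) * ∑ i, (hΔ.eigenvalues i)^2) := Real.sqrt_le_sqrt hsq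
      _ = Real.sqrt d * Real.sqrt (∑ i, ∑ j, (Sig i j - SigHat i j) ^ 2) := by
          rw [hF, Real.sqrt_mul (Nat.cast_nonneg d)]
  have heig : (hSig.1.sub hSigHat.1).eigenvalues = hΔ.eigenvalues := rfl
  rw [heig] at hcond
  linarith [hcond, hlogdet, htr, htrΔ, hquad, htrHat, habs]

section Analysis
variable {d : ℕ}

lemma gaussDensity_pos (m : Fin d → ℝ) (S : Matrix (Fin d) (Fin d) ℝ)
    (hS : 0 < S.det) (x : Fin d → ℝ) : 0 < gaussDensity m S x := by
  unfold gaussDensity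
  positivity

lemma log_gaussDensity (m : Fin d → ℝ) (S : Matrix (Fin d) (Fin d) ℝ)
    (hS : 0 < S.det) (x : Fin d → ℝ) :
    Real.log (gaussDensity m S x) = (-(d : ℝ) / 2) * Real.log (2 * π)
      + (-(1 : ℝ) / 2) * Real.log S.det
      + (-((x - m) ⬝ᵥ (S⁻¹ *ᵥ (x - m))) / 2) := by
  unfold gaussDensity
  rw [Real.log_mul (by positivity) (Real.exp_ne_zero _),
    Real.log_mul (by positivity) (by positivity),
    Real.log_rpow (by positivity), Real.log_rpow hS, Real.log_exp]

-- a.e. positivity of p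
lemma p_pos_ae (p : (Fin d → ℝ) → ℝ) (hp : ∀ x, 0 ≤ p x) (hpm : Measurable p)
    (P : Measure (Fin d → ℝ))
    (hP : P = volume.withDensity fun x => ENNReal.ofReal (p x)) :
    ∀ᵐ x ∂P, 0 < p x := by
  rw [ae_iff]
  have hs : MeasurableSet {x : Fin d → ℝ | ¬ 0 < p x} := by
    have : {x : Fin d → ℝ | ¬ 0 < p x} = p ⁻¹' (Set.Iic 0) := by
      ext x; simp [not_lt]
    rw [this]; exact hpm measurableSet_Iic
  rw [hP, withDensity_apply _ hs]
  have : ∀ x ∈ {x : Fin d → ℝ | ¬ 0 < p x}, ENNReal.ofReal (p x) = 0 := by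
    intro x hx
    simp only [Set.mem_setOf_eq, not_lt] at hx
    exact ENNReal.ofReal_eq_zero.mpr hx
  calc ∫⁻ x in {x : Fin d → ℝ | ¬ 0 < p x}, ENNReal.ofReal (p x)
      = ∫⁻ x in {x : Fin d → ℝ | ¬ 0 < p x}, 0 := setLIntegral_congr_fun hs this
    _ = 0 := lintegral_zero

-- integrability of log p wrt P
lemma logp_int (p : (Fin d → ℝ) → ℝ) (hp : ∀ x, 0 ≤ p x) (hpm : Measurable p)
    (P : Measure (Fin d → ℝ))
    (hP : P = volume.withDensity fun x => ENNReal.ofReal (p x))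
    (hent : Integrable (fun x => p x * |Real.log (p x)|) volume) :
    Integrable (fun x => Real.log (p x)) P := by
  rw [hP, integrable_withDensity_iff (hpm.ennreal_ofReal)
    (ae_of_all _ fun x => ENNReal.ofReal_lt_top)]
  have hmeas : AEStronglyMeasurable (fun x => Real.log (p x) * (ENNReal.ofReal (p x)).toReal)
      (volume : Measure (Fin d → ℝ)) := by
    apply Measurable.aestronglyMeasurable
    exact (Real.measurable_log.comp hpm).mul (ENNReal.measurable_toReal.comp hpm.ennreal_ofReal)
  refine Integrable.mono' hent hmeas (ae_of_all _ fun x => ?_)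
  rw [ENNReal.toReal_ofReal (hp x)]
  rw [norm_mul, Real.norm_eq_abs, Real.norm_eq_abs, abs_of_nonneg (hp x)]
  rw [mul_comm]

variable (P : Measure (Fin d → ℝ)) [IsProbabilityMeasure P]

lemma coord_int (hmom : Integrable (fun x : Fin d → ℝ => ∑ i, x i ^ 2) P) (i : Fin d) :
    Integrable (fun x : Fin d → ℝ => x i) P := by
  refine Integrable.mono' ((integrable_const 1).add hmom)
    (measurable_pi_apply i).aestronglyMeasurable (ae_of_all _ fun x => ?_)
  have h1 : |x i| ≤ 1 + x i ^ 2 := by nlinarith [sq_nonneg (|x i| - 1), sq_abs (x i)]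
  have h2 : x i ^ 2 ≤ ∑ k, x k ^ 2 :=
    Finset.single_le_sum (fun k _ => sq_nonneg (x k)) (Finset.mem_univ i)
  calc ‖x i‖ = |x i| := rfl
    _ ≤ 1 + ∑ k, x k ^ 2 := by linarith

lemma coord_mul_int (hmom : Integrable (fun x : Fin d → ℝ => ∑ i, x i ^ 2) P) (i j : Fin d) :
    Integrable (fun x : Fin d → ℝ => x i * x j) P := by
  refine Integrable.mono' hmom
    ((measurable_pi_apply i).mul (measurable_pi_apply j)).aestronglyMeasurable
    (ae_of_all _ fun x => ?_)
  have hi : x i ^ 2 ≤ ∑ k, x k ^ 2 :=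
    Finset.single_le_sum (fun k _ => sq_nonneg (x k)) (Finset.mem_univ i)
  have hj : x j ^ 2 ≤ ∑ k, x k ^ 2 :=
    Finset.single_le_sum (fun k _ => sq_nonneg (x k)) (Finset.mem_univ j)
  have : ‖x i * x j‖ = |x i| * |x j| := by rw [norm_mul]; rfl
  rw [this]
  nlinarith [sq_nonneg (|x i| - |x j|), sq_abs (x i), sq_abs (x j)]

lemma shift_mul_int (hmom : Integrable (fun x : Fin d → ℝ => ∑ i, x i ^ 2) P)
    (a b : ℝ) (i j : Fin d) :
    Integrable (fun x : Fin d → ℝ => (x i - a) * (x j - b)) P := by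
  have : (fun x : Fin d → ℝ => (x i - a) * (x j - b))
      = fun x => x i * x j - b * x i - a * x j + a * b := funext fun x => by ring
  rw [this]
  exact (((coord_mul_int P hmom i j).sub ((coord_int P hmom i).const_mul b)).sub
    ((coord_int P hmom j).const_mul a)).add (integrable_const _)

lemma shift_integral (hmom : Integrable (fun x : Fin d → ℝ => ∑ i, x i ^ 2) P)
    (mu : Fin d → ℝ) (hmu : ∀ i, mu i = ∫ x, x i ∂P)
    (Sig : Matrix (Fin d) (Fin d) ℝ)
    (hSigdef : ∀ i j, Sig i j = ∫ x, (x i - mu i) * (x j - mu j) ∂P)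
    (a : Fin d → ℝ) (i j : Fin d) :
    ∫ x, (x i - a i) * (x j - a j) ∂P = Sig i j + (mu i - a i) * (mu j - a j) := by
  have hfun : (fun x : Fin d → ℝ => (x i - a i) * (x j - a j))
      = fun x => (x i - mu i) * (x j - mu j)
        + ((mu j - a j) * (x i - mu i) + (mu i - a i) * (x j - mu j)
        + (mu i - a i) * (mu j - a j)) := funext fun x => by ring
  have hint1 : Integrable (fun x : Fin d → ℝ => (x i - mu i) * (x j - mu j)) P :=
    shift_mul_int P hmom (mu i) (mu j) i j
  have hcent : ∀ k : Fin d, Integrable (fun x : Fin d → ℝ => x k - mu k) P ∧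
      ∫ x, (x k - mu k) ∂P = 0 := by
    intro k
    constructor
    · exact (coord_int P hmom k).sub (integrable_const _)
    · rw [integral_sub (coord_int P hmom k) (integrable_const _), integral_const]
      simp [(hmu k).symm]
  have hint2 : Integrable (fun x : Fin d → ℝ => (mu j - a j) * (x i - mu i)
      + (mu i - a i) * (x j - mu j) + (mu i - a i) * (mu j - a j)) P :=
    ((((hcent i).1).const_mul _).add (((hcent j).1).const_mul _)).add (integrable_const _)
  have h2 : ∫ x, ((mu j - a j) * (x i - mu i) + (mu i - a i) * (x j - mu j)
      + (mu i - a i) * (mu j - a j)) ∂P = (mu i - a i) * (mu j - a j) := by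
    have hA : Integrable (fun x : Fin d → ℝ => (mu j - a j) * (x i - mu i)) P :=
      ((hcent i).1).const_mul _
    have hB : Integrable (fun x : Fin d → ℝ => (mu i - a i) * (x j - mu j)) P :=
      ((hcent j).1).const_mul _
    have hAB : Integrable (fun x : Fin d → ℝ => (mu j - a j) * (x i - mu i)
        + (mu i - a i) * (x j - mu j)) P := hA.add hB
    rw [integral_add hAB (integrable_const _), integral_add hA hB,
      MeasureTheory.integral_const_mul, MeasureTheory.integral_const_mul, (hcent i).2, (hcent j).2, integral_const]
    simp
  rw [hfun, integral_add hint1 hint2, h2, ← hSigdef i j]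

lemma quad_expand (A : Matrix (Fin d) (Fin d) ℝ) (m : Fin d → ℝ) (x : Fin d → ℝ) :
    (x - m) ⬝ᵥ (A *ᵥ (x - m)) = ∑ i, ∑ j, A i j * ((x i - m i) * (x j - m j)) := by
  simp only [dotProduct, Matrix.mulVec, Pi.sub_apply, dotProduct, Finset.mul_sum]
  exact Finset.sum_congr rfl fun i _ => Finset.sum_congr rfl fun j _ => by ring

lemma quad_int (hmom : Integrable (fun x : Fin d → ℝ => ∑ i, x i ^ 2) P)
    (A : Matrix (Fin d) (Fin d) ℝ) (m : Fin d → ℝ) :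
    Integrable (fun x : Fin d → ℝ => (x - m) ⬝ᵥ (A *ᵥ (x - m))) P := by
  have : (fun x : Fin d → ℝ => (x - m) ⬝ᵥ (A *ᵥ (x - m)))
      = fun x => ∑ i, ∑ j, A i j * ((x i - m i) * (x j - m j)) :=
    funext fun x => quad_expand A m x
  rw [this]
  exact integrable_finset_sum _ fun i _ => integrable_finset_sum _ fun j _ =>
    (shift_mul_int P hmom (m i) (m j) i j).const_mul _

lemma quad_integral (hmom : Integrable (fun x : Fin d → ℝ => ∑ i, x i ^ 2) P)
    (mu : Fin d → ℝ) (hmu : ∀ i, mu i = ∫ x, x i ∂P)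
    (Sig : Matrix (Fin d) (Fin d) ℝ)
    (hSigdef : ∀ i j, Sig i j = ∫ x, (x i - mu i) * (x j - mu j) ∂P)
    (A : Matrix (Fin d) (Fin d) ℝ) (m : Fin d → ℝ) :
    ∫ x, (x - m) ⬝ᵥ (A *ᵥ (x - m)) ∂P
      = ∑ i, ∑ j, A i j * (Sig i j + (mu i - m i) * (mu j - m j)) := by
  have h1 : (fun x : Fin d → ℝ => (x - m) ⬝ᵥ (A *ᵥ (x - m)))
      = fun x => ∑ i, ∑ j, A i j * ((x i - m i) * (x j - m j)) :=
    funext fun x => quad_expand A m x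
  rw [h1, integral_finset_sum _ (f := fun i (x : Fin d → ℝ) => ∑ j, A i j * ((x i - m i) * (x j - m j))) fun i _ => integrable_finset_sum _ fun j _ =>
    (shift_mul_int P hmom (m i) (m j) i j).const_mul _]
  refine Finset.sum_congr rfl fun i _ => ?_
  rw [integral_finset_sum _ fun j _ => (shift_mul_int P hmom (m i) (m j) i j).const_mul _]
  refine Finset.sum_congr rfl fun j _ => ?_
  rw [MeasureTheory.integral_const_mul, shift_integral P hmom mu hmu Sig hSigdef m i j]

lemma loggauss_integrable (hmom : Integrable (fun x : Fin d → ℝ => ∑ i, x i ^ 2) P)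
    (m : Fin d → ℝ) (S : Matrix (Fin d) (Fin d) ℝ) (hS : 0 < S.det) :
    Integrable (fun x => Real.log (gaussDensity m S x)) P := by
  have hfun : (fun x : Fin d → ℝ => Real.log (gaussDensity m S x))
      = fun x => ((-(d : ℝ) / 2) * Real.log (2 * π) + (-(1 : ℝ) / 2) * Real.log S.det)
        + (-(1 : ℝ) / 2) * ((x - m) ⬝ᵥ (S⁻¹ *ᵥ (x - m))) :=
    funext fun x => by rw [log_gaussDensity m S hS x]; ring
  rw [hfun]
  exact (integrable_const _).add ((quad_int P hmom S⁻¹ m).const_mul _)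

lemma loggauss_integral (hmom : Integrable (fun x : Fin d → ℝ => ∑ i, x i ^ 2) P)
    (mu : Fin d → ℝ) (hmu : ∀ i, mu i = ∫ x, x i ∂P)
    (Sig : Matrix (Fin d) (Fin d) ℝ)
    (hSigdef : ∀ i j, Sig i j = ∫ x, (x i - mu i) * (x j - mu j) ∂P)
    (m : Fin d → ℝ) (S : Matrix (Fin d) (Fin d) ℝ) (hS : 0 < S.det) :
    ∫ x, Real.log (gaussDensity m S x) ∂P
      = ((-(d : ℝ) / 2) * Real.log (2 * π) + (-(1 : ℝ) / 2) * Real.log S.det)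
        + (-(1 : ℝ) / 2) * ∑ i, ∑ j, S⁻¹ i j * (Sig i j + (mu i - m i) * (mu j - m j)) := by
  have hfun : (fun x : Fin d → ℝ => Real.log (gaussDensity m S x))
      = fun x => ((-(d : ℝ) / 2) * Real.log (2 * π) + (-(1 : ℝ) / 2) * Real.log S.det)
        + (-(1 : ℝ) / 2) * ((x - m) ⬝ᵥ (S⁻¹ *ᵥ (x - m))) :=
    funext fun x => by rw [log_gaussDensity m S hS x]; ring
  rw [hfun, integral_add (integrable_const _) ((quad_int P hmom S⁻¹ m).const_mul _),
    integral_const, MeasureTheory.integral_const_mul,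
    quad_integral P hmom mu hmu Sig hSigdef S⁻¹ m]
  simp

end Analysis

/-- Theorem 1 of the paper: under the sufficient condition
`(1/λ̂_min)·(‖μ − μ̂‖₂² + ‖Σ − Σ̂‖_N) + √d·‖Σ − Σ̂‖_F ≤ ‖μ‖₂²`, replacing the
terminal distribution `Q₀ = N(0, I_d)` by `Q̂ = N(μ̂, Σ̂)` does not increase the
KL divergence from `P`: `D_KL(P ‖ Q̂) ≤ D_KL(P ‖ Q₀)`. -/
theorem stmt_1 (d : ℕ) (hd : 0 < d)
    (p : (Fin d → ℝ) → ℝ) (hp : ∀ x, 0 ≤ p x) (hpm : Measurable p)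
    (P : Measure (Fin d → ℝ)) [IsProbabilityMeasure P]
    (hP : P = volume.withDensity fun x => ENNReal.ofReal (p x))
    (hmom : Integrable (fun x => ∑ i, x i ^ 2) P)
    (hent : Integrable (fun x => p x * |Real.log (p x)|) volume)
    (mu : Fin d → ℝ) (hmu : ∀ i, mu i = ∫ x, x i ∂P)
    (Sig : Matrix (Fin d) (Fin d) ℝ) (hSig : Sig.PosDef)
    (hSigdef : ∀ i j, Sig i j = ∫ x, (x i - mu i) * (x j - mu j) ∂P)
    (muHat : Fin d → ℝ) (SigHat : Matrix (Fin d) (Fin d) ℝ)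
    (hSigHat : SigHat.PosDef)
    (hcond :
      (⨅ i, hSigHat.1.eigenvalues i)⁻¹ *
          ((∑ i, (mu i - muHat i) ^ 2) +
            ∑ i, |(hSig.1.sub hSigHat.1).eigenvalues i|) +
        Real.sqrt d * Real.sqrt (∑ i, ∑ j, (Sig i j - SigHat i j) ^ 2) ≤
      ∑ i, mu i ^ 2) :
    klDivGauss P p muHat SigHat ≤ klDivGauss P p 0 (1 : Matrix (Fin d) (Fin d) ℝ) := by
  have hdet1 : (0:ℝ) < (1 : Matrix (Fin d) (Fin d) ℝ).det := by simp
  have key : ∀ (m : Fin d → ℝ) (S : Matrix (Fin d) (Fin d) ℝ), 0 < S.det →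
      klDivGauss P p m S
        = (∫ x, Real.log (p x) ∂P) - ∫ x, Real.log (gaussDensity m S x) ∂P := by
    intro m S hS
    have hae := p_pos_ae p hp hpm P hP
    have hcongr : (fun x => Real.log (p x / gaussDensity m S x))
        =ᵐ[P] fun x => Real.log (p x) - Real.log (gaussDensity m S x) :=
      hae.mono fun x hx => by
        dsimp only
        rw [Real.log_div hx.ne' (gaussDensity_pos m S hS x).ne']
    simp only [klDivGauss]
    rw [integral_congr_ae hcongr,
      integral_sub (logp_int p hp hpm P hP hent) (loggauss_integrable P hmom m S hS)]
  rw [key muHat SigHat hSigHat.det_pos, key 0 1 hdet1,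
    loggauss_integral P hmom mu hmu Sig hSigdef 0 1 hdet1,
    loggauss_integral P hmom mu hmu Sig hSigdef muHat SigHat hSigHat.det_pos]
  have hms := matrix_side hd mu muHat Sig hSig SigHat hSigHat hcond
  have e0 : ∑ i, ∑ j, (1 : Matrix (Fin d) (Fin d) ℝ)⁻¹ i j
        * (Sig i j + (mu i - (0 : Fin d → ℝ) i) * (mu j - (0 : Fin d → ℝ) j))
      = Sig.trace + ∑ i, mu i ^ 2 := by
    simp only [inv_one, Matrix.one_apply, Pi.zero_apply, sub_zero, ite_mul, one_mul,
      zero_mul, Finset.sum_ite_eq, Finset.mem_univ, if_true]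
    rw [Finset.sum_add_distrib]
    simp [Matrix.trace, Matrix.diag, pow_two]
  have e1 : ∑ i, ∑ j, SigHat⁻¹ i j * (Sig i j + (mu i - muHat i) * (mu j - muHat j))
      = (SigHat⁻¹ * Sig).trace + (mu - muHat) ⬝ᵥ (SigHat⁻¹ *ᵥ (mu - muHat)) := by
    have t2 : (mu - muHat) ⬝ᵥ (SigHat⁻¹ *ᵥ (mu - muHat))
        = ∑ i, ∑ j, SigHat⁻¹ i j * ((mu i - muHat i) * (mu j - muHat j)) := by
      have := quad_expand SigHat⁻¹ (0 : Fin d → ℝ) (mu - muHat)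
      simpa using this
    have t1 : (SigHat⁻¹ * Sig).trace = ∑ i, ∑ j, SigHat⁻¹ i j * Sig i j := by
      simp only [Matrix.trace, Matrix.diag, Matrix.mul_apply]
      refine Finset.sum_congr rfl fun i _ => Finset.sum_congr rfl fun j _ => ?_
      rw [show Sig j i = Sig i j from (hSig.1.apply i j) ▸ rfl]
    rw [t1, t2, ← Finset.sum_add_distrib]
    refine Finset.sum_congr rfl fun i _ => ?_
    rw [← Finset.sum_add_distrib]
    exact Finset.sum_congr rfl fun j _ => by ring
  rw [e0, e1]
  simp only [Matrix.det_one, Real.log_one]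
  linarith [hms]
end
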